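/- Let P be a connected finite nonempty poset and let Q be the direct sum of chains Q₁, Q₂, …, Qₙ. Then L(P,Q) = L(P,Q₁) + ⋯ + L(P,Qₙ) as ideals of S = K[x_{pq} : p ∈ P, q ∈ Q], where L(P,Qᵢ) denotes the ideal of S generated by the monomials ∏_{p ∈ P} x_{p,φ(p)} over isotone maps φ: P → Q whose image lies in Qᵢ; and consequently L(P,Q)^∨ = L(P,Q₁)^∨ · L(P,Q₂)^∨ ⋯ L(P,Qₙ)^∨, the Alexander dual of the sum being the product of the Alexander duals. -/

import Mathlib

open MvPolynomial

/-- The ideal `L(P,Q)` generated by the monomials `u_φ = ∏_{p∈P} x_{p,φ(p)}`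
over all isotone maps `φ : P → Q`. -/
noncomputable def isoL (P Q K : Type*) [PartialOrder P] [PartialOrder Q] [Fintype P]
    [Field K] : Ideal (MvPolynomial (P × Q) K) :=
  Ideal.span { u | ∃ φ : P →o Q, u = ∏ p : P, X (p, φ p) }

/-- The Alexander dual `L(P,Q)^∨ = ⋂_{φ} (x_{p,φ(p)} : p ∈ P)`. -/
noncomputable def isoDual (P Q K : Type*) [PartialOrder P] [PartialOrder Q]
    [Field K] : Ideal (MvPolynomial (P × Q) K) :=
  ⨅ φ : P →o Q, Ideal.span { u | ∃ p : P, u = X (p, φ p) }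

/-- The ideal `L(Q,P)^τ ⊆ K[x_{pq}]` generated by `∏_{q∈Q} x_{ψ(q),q}` for `ψ ∈ Hom(Q,P)`. -/
noncomputable def isoTau (P Q K : Type*) [PartialOrder P] [PartialOrder Q] [Fintype Q]
    [Field K] : Ideal (MvPolynomial (P × Q) K) :=
  Ideal.span { u | ∃ ψ : Q →o P, u = ∏ q : Q, X (ψ q, q) }

/-- The prime ideal `𝔭_ψ = (x_{ψ(q),q} : q ∈ Q)`. -/
noncomputable def pPsi (P Q K : Type*) [PartialOrder P] [PartialOrder Q]
    [Field K] (ψ : Q →o P) : Ideal (MvPolynomial (P × Q) K) :=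
  Ideal.span { u | ∃ q : Q, u = X (ψ q, q) }

/-- The height of an ideal: the infimum of the heights (in the prime spectrum)
of the prime ideals containing it. -/
noncomputable def idealHeight {R : Type*} [CommRing R] (I : Ideal R) : ℕ∞ :=
  ⨅ J : {J : PrimeSpectrum R // I ≤ J.asIdeal}, Order.height J.1

/-- `P` is connected: any two elements are linked by a chain of comparabilities. -/
def PosetConnected (P : Type*) [PartialOrder P] : Prop :=
  ∀ a b : P, Relation.ReflTransGen (fun x y : P => x ≤ y ∨ y ≤ x) a b

/-- `P` is rooted: two incomparable elements have no common strict upper bound. -/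
def Rooted (P : Type*) [PartialOrder P] : Prop :=
  ∀ p₁ p₂ p : P, ¬ p₁ ≤ p₂ → ¬ p₂ ≤ p₁ → ¬ (p₁ < p ∧ p₂ < p)

/-- `P` is co-rooted: two incomparable elements have no common strict lower bound. -/
def CoRooted (P : Type*) [PartialOrder P] : Prop :=
  ∀ p₁ p₂ p : P, ¬ p₁ ≤ p₂ → ¬ p₂ ≤ p₁ → ¬ (p < p₁ ∧ p < p₂)

/-- `P` is a chain, i.e. totally ordered. -/
def IsChainPoset (P : Type*) [PartialOrder P] : Prop :=
  ∀ a b : P, a ≤ b ∨ b ≤ a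

section Aux

lemma sum_ideals_eq_sup {R ι : Type*} [CommSemiring R] (s : Finset ι) (I : ι → Ideal R) :
    ∑ i ∈ s, I i = s.sup I := by
  induction s using Finset.cons_induction with
  | empty => simp
  | cons a s ha ih => rw [Finset.sum_cons, Finset.sup_cons, ih, Submodule.add_eq_sup]

lemma sum_ideals_eq_iSup {R ι : Type*} [CommSemiring R] [Fintype ι] (I : ι → Ideal R) :
    ∑ i : ι, I i = ⨆ i, I i := by
  rw [sum_ideals_eq_sup, Finset.sup_univ_eq_iSup]

lemma monomial_finset_sum {σ K ι : Type*} [CommSemiring K] (s : Finset ι) (d : ι → (σ →₀ ℕ)) :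
    (MvPolynomial.monomial (∑ i ∈ s, d i) (1 : K)) =
      ∏ i ∈ s, MvPolynomial.monomial (d i) (1 : K) := by
  induction s using Finset.cons_induction with
  | empty => simp [MvPolynomial.monomial_zero']
  | cons a s ha ih =>
      rw [Finset.sum_cons, Finset.prod_cons, ← ih, MvPolynomial.monomial_mul, one_mul]

lemma span_X_set_eq {σ K : Type*} [CommSemiring K] (s : Set σ) :
    Ideal.span { u : MvPolynomial σ K | ∃ x ∈ s, u = MvPolynomial.X x } =
      Ideal.span (MvPolynomial.X '' s) := by
  congr 1
  ext u
  simp [Set.mem_image, eq_comm]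

end Aux

/-- Let `P` be connected and let `Q` be the direct sum of chains
`Q₁, …, Qₙ`, encoded by a component map `c : Q → Fin n` with comparable elements in the
same component and each component totally ordered. Then `L(P,Q) = L(P,Q₁) + ⋯ + L(P,Qₙ)`
and `L(P,Q)^∨ = L(P,Q₁)^∨ ⋯ L(P,Qₙ)^∨`. -/
theorem stmt_18 (P Q K : Type*) [PartialOrder P] [PartialOrder Q]
    [Fintype P] [Fintype Q] [Nonempty P] [Nonempty Q] [Field K]
    (hconn : PosetConnected P)
    (n : ℕ) (c : Q → Fin n)
    (hcomp : ∀ q q' : Q, q ≤ q' → c q = c q')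
    (hchain : ∀ q q' : Q, c q = c q' → q ≤ q' ∨ q' ≤ q) :
    (isoL P Q K =
      ∑ i : Fin n, Ideal.span
        { u | ∃ φ : P →o Q, (∀ p : P, c (φ p) = i) ∧ u = ∏ p : P, X (p, φ p) }) ∧
    (isoDual P Q K =
      ∏ i : Fin n, ⨅ φ : { φ : P →o Q // ∀ p : P, c (φ p) = i },
        Ideal.span { u | ∃ p : P, u = X (p, (φ : P →o Q) p) }) := by
  classical
  -- every isotone map has constant component
  have hconst : ∀ φ : P →o Q, ∀ p p' : P, c (φ p) = c (φ p') := by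
    intro φ p p'
    induction hconn p p' with
    | refl => rfl
    | tail _ h ih =>
        rename_i x y
        rcases h with h | h
        · exact ih.trans (hcomp _ _ (φ.monotone h))
        · exact ih.trans (hcomp _ _ (φ.monotone h)).symm
  -- membership criterion for the "variable" ideals
  have memJ : ∀ (φ : P →o Q) (f : MvPolynomial (P × Q) K),
      f ∈ Ideal.span { u : MvPolynomial (P × Q) K | ∃ p : P, u = X (p, φ p) } ↔
        ∀ m ∈ f.support, ∃ p : P, (m : (P × Q) →₀ ℕ) (p, φ p) ≠ 0 := by
    intro φ f
    have hset : { u : MvPolynomial (P × Q) K | ∃ p : P, u = X (p, φ p) } =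
        X '' { v : P × Q | ∃ p : P, v = (p, φ p) } := by
      ext u
      constructor
      · rintro ⟨p, rfl⟩; exact ⟨(p, φ p), ⟨p, rfl⟩, rfl⟩
      · rintro ⟨v, ⟨p, rfl⟩, rfl⟩; exact ⟨p, rfl⟩
    rw [hset, mem_ideal_span_X_image]
    constructor
    · intro h m hm
      obtain ⟨v, ⟨p, rfl⟩, hv⟩ := h m hm
      exact ⟨p, hv⟩
    · intro h m hm
      obtain ⟨p, hp⟩ := h m hm
      exact ⟨(p, φ p), ⟨p, rfl⟩, hp⟩
  set D : Fin n → Ideal (MvPolynomial (P × Q) K) := fun i =>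
    ⨅ φ : { φ : P →o Q // ∀ p : P, c (φ p) = i },
      Ideal.span { u : MvPolynomial (P × Q) K | ∃ p : P, u = X (p, (φ : P →o Q) p) } with hD
  constructor
  · -- part 1
    rw [sum_ideals_eq_iSup, ← Ideal.span_iUnion]
    unfold isoL
    congr 1
    ext u
    constructor
    · rintro ⟨φ, rfl⟩
      refine Set.mem_iUnion.2 ⟨c (φ (Classical.arbitrary P)), φ, fun p => hconst φ p _, rfl⟩
    · intro hu
      obtain ⟨i, φ, _, rfl⟩ := Set.mem_iUnion.1 hu
      exact ⟨φ, rfl⟩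
  · -- part 2
    have hdual : isoDual P Q K = ⨅ i : Fin n, D i := by
      unfold isoDual
      apply le_antisymm
      · refine le_iInf fun i => le_iInf fun φ => iInf_le _ (φ : P →o Q)
      · refine le_iInf fun φ => ?_
        have hi : ∀ p : P, c (φ p) = c (φ (Classical.arbitrary P)) :=
          fun p => hconst φ p _
        exact le_trans (iInf_le _ (c (φ (Classical.arbitrary P))))
          (iInf_le _ (⟨φ, hi⟩ : { ψ : P →o Q // ∀ p : P, c (ψ p) = _ }))
    rw [hdual]
    apply le_antisymm
    · -- intersection ≤ product: split monomials by component
      intro f hf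
      rw [MvPolynomial.as_sum f]
      refine Ideal.sum_mem _ fun m hm => ?_
      -- split the exponent m by component
      set d : Fin n → ((P × Q) →₀ ℕ) := fun i => m.filter (fun v => c v.2 = i) with hd
      have hsum : ∑ i : Fin n, d i = m := by
        ext v
        rw [Finsupp.finset_sum_apply]
        simp only [hd, Finsupp.filter_apply]
        simp
      have hmono : (monomial m (MvPolynomial.coeff m f) : MvPolynomial (P × Q) K) =
          C (MvPolynomial.coeff m f) * ∏ i : Fin n, monomial (d i) 1 := by
        rw [← monomial_finset_sum, hsum, C_mul_monomial, mul_one]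
      rw [hmono]
      refine Ideal.mul_mem_left _ _ (Ideal.prod_mem_prod fun i _ => ?_)
      -- monomial (d i) 1 ∈ D i
      refine Submodule.mem_iInf _ |>.2 fun φ => ?_
      rw [memJ]
      intro m' hm'
      rw [MvPolynomial.support_monomial] at hm'
      rw [if_neg (one_ne_zero)] at hm'
      rcases Finset.mem_singleton.1 hm' with rfl
      have hfi : f ∈ Ideal.span
          { u : MvPolynomial (P × Q) K | ∃ p : P, u = X (p, (φ : P →o Q) p) } := by
        exact (Submodule.mem_iInf _ |>.1 ((Submodule.mem_iInf _ |>.1 hf) i)) φ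
      obtain ⟨p, hp⟩ := (memJ (φ : P →o Q) f).1 hfi m hm
      refine ⟨p, ?_⟩
      simpa [hd, Finsupp.filter_apply, φ.2 p] using hp
    · -- product ≤ intersection
      refine le_iInf fun j => ?_
      calc ∏ i : Fin n, D i = D j * ∏ i ∈ Finset.univ.erase j, D i :=
            (Finset.mul_prod_erase _ _ (Finset.mem_univ j)).symm
        _ ≤ D j := Ideal.mul_le_inf.trans inf_le_left
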